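/- For each n ≥ 2, the reaction network G̃ on ℝⁿ with edges: for each i (indices cyclic mod n) and each p ≠ i, the edge e_p + 2e_i → 3e_i; and for each i and each p ≠ i+1, the edge e_p + 2e_i → 2e_i + e_{i+1}, is strongly endotactic. -/

import Mathlib

/-- For each `n ≥ 2`, the relative-population network
`G̃^rep_recomb(n)`, with edges `e_p + 2e_i → 3e_i` (`p ≠ i`) and
`e_p + 2e_i → 2e_i + e_{i+1}` (`p ≠ i+1`, indices cyclic), is strongly endotactic. -/
theorem recombn_rep_relative_network_stronglyEndotactic
    (n : ℕ) [NeZero n] (hn : 2 ≤ n)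
    (E : Set ((Fin n → ℝ) × (Fin n → ℝ)))
    (hE : E = {e | ∃ i p : Fin n,
      (p ≠ i ∧ e = ((Pi.single p (1:ℝ) : Fin n → ℝ) + (2:ℝ) • (Pi.single i (1:ℝ) : Fin n → ℝ),
                    (3:ℝ) • (Pi.single i (1:ℝ) : Fin n → ℝ))) ∨
      (p ≠ i + 1 ∧ e = ((Pi.single p (1:ℝ) : Fin n → ℝ) + (2:ℝ) • (Pi.single i (1:ℝ) : Fin n → ℝ),
                    (2:ℝ) • (Pi.single i (1:ℝ) : Fin n → ℝ) + Pi.single (i+1) (1:ℝ)))}) :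
    ∀ w : Fin n → ℝ, (∃ e ∈ E, (∑ i, w i * (e.2 i - e.1 i)) ≠ 0) →
      ((∀ e ∈ E, (∀ e' ∈ E, (∑ i, w i * e.1 i) ≤ (∑ i, w i * e'.1 i)) →
          0 ≤ (∑ i, w i * (e.2 i - e.1 i))) ∧
        ∃ e ∈ E, (∀ e' ∈ E, (∑ i, w i * e.1 i) ≤ (∑ i, w i * e'.1 i)) ∧
          0 < (∑ i, w i * (e.2 i - e.1 i))) := by
  intro w hex
  have h10 : ∀ i : Fin n, i ≠ i + 1 := by
    intro i h
    have h01 : (0 : Fin n) = 1 := by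
      nth_rewrite 1 [show i = i + 0 from (add_zero i).symm] at h
      exact add_left_cancel h
    have hv : (1 : Fin n).val = 1 % n := Fin.val_one' n
    rw [← h01] at hv
    simp at hv
    omega
  -- source evaluation
  have hsrc : ∀ p i : Fin n,
      ∑ j, w j * (((Pi.single p (1:ℝ) : Fin n → ℝ) + (2:ℝ) • (Pi.single i (1:ℝ) : Fin n → ℝ)) j)
        = w p + 2 * w i := by
    intro p i
    simp [Pi.single_apply, mul_add, mul_ite, Finset.sum_add_distrib, Finset.sum_ite_eq', mul_comm]
  -- diff evaluation for type A
  have hdA : ∀ p i : Fin n,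
      ∑ j, w j * (((3:ℝ) • (Pi.single i (1:ℝ) : Fin n → ℝ)) j
        - ((Pi.single p (1:ℝ) : Fin n → ℝ) + (2:ℝ) • (Pi.single i (1:ℝ) : Fin n → ℝ)) j)
        = w i - w p := by
    intro p i
    simp only [mul_sub, Finset.sum_sub_distrib, hsrc]
    have h3 : ∑ j, w j * ((3:ℝ) • (Pi.single i (1:ℝ) : Fin n → ℝ)) j = 3 * w i := by
      simp [Pi.single_apply, mul_ite, Finset.sum_ite_eq', mul_comm]
    rw [h3]; ring
  -- diff evaluation for type B
  have hdB : ∀ p i : Fin n,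
      ∑ j, w j * (((2:ℝ) • (Pi.single i (1:ℝ) : Fin n → ℝ) + (Pi.single (i+1) (1:ℝ) : Fin n → ℝ)) j
        - ((Pi.single p (1:ℝ) : Fin n → ℝ) + (2:ℝ) • (Pi.single i (1:ℝ) : Fin n → ℝ)) j)
        = w (i+1) - w p := by
    intro p i
    simp only [mul_sub, Finset.sum_sub_distrib, hsrc]
    have h3 : ∑ j, w j * (((2:ℝ) • (Pi.single i (1:ℝ) : Fin n → ℝ)
        + (Pi.single (i+1) (1:ℝ) : Fin n → ℝ)) j) = 2 * w i + w (i+1) := by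
      simp [Pi.single_apply, mul_add, mul_ite, Finset.sum_add_distrib, Finset.sum_ite_eq', mul_comm]
    rw [h3]; ring
  -- minimum of w
  obtain ⟨i₀, -, hi₀⟩ := Finset.exists_min_image Finset.univ w
    ⟨⟨0, Nat.pos_of_ne_zero (NeZero.ne n)⟩, Finset.mem_univ _⟩
  have hmle : ∀ j, w i₀ ≤ w j := fun j => hi₀ j (Finset.mem_univ j)
  set m := w i₀ with hm
  -- the minimal edge e₀ : source 3 e_{i₀}
  have he₀ : ((Pi.single i₀ (1:ℝ) : Fin n → ℝ) + (2:ℝ) • (Pi.single i₀ (1:ℝ) : Fin n → ℝ),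
      (2:ℝ) • (Pi.single i₀ (1:ℝ) : Fin n → ℝ) + Pi.single (i₀+1) (1:ℝ)) ∈ E := by
    rw [hE]; exact ⟨i₀, i₀, Or.inr ⟨h10 i₀, rfl⟩⟩
  -- every source value is ≥ 3m
  have hlb : ∀ e' ∈ E, 3 * m ≤ ∑ j, w j * e'.1 j := by
    intro e' he'
    rw [hE] at he'
    obtain ⟨i, p, h | h⟩ := he' <;>
    · rw [h.2]; simp only [hsrc]
      have := hmle p; have := hmle i; linarith
  -- w is not constant
  have hstar : ∃ i : Fin n, w i = m ∧ w (i+1) ≠ m := by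
    by_contra hc
    push_neg at hc
    have hall : ∀ j : Fin n, w j = m := by
      open Fin.NatCast in
      have hk : ∀ k : ℕ, w (i₀ + (k : Fin n)) = m := by
        intro k
        induction k with
        | zero => simp [hm]
        | succ k ih =>
          have hcast : ((k+1 : ℕ) : Fin n) = (k : Fin n) + 1 := by push_cast; ring
          rw [hcast, ← add_assoc]
          exact hc _ ih
      intro j
      have := hk (j - i₀).val
      rwa [Fin.cast_val_eq_self, add_sub_cancel] at this
    obtain ⟨e, he, hne⟩ := hex
    rw [hE] at he
    obtain ⟨i, p, h | h⟩ := he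
    · rw [h.2] at hne; rw [hdA, hall i, hall p, sub_self] at hne; exact hne rfl
    · rw [h.2] at hne; rw [hdB, hall (i+1), hall p, sub_self] at hne; exact hne rfl
  obtain ⟨i₁, hi₁, hi₁'⟩ := hstar
  have hi₁lt : m < w (i₁+1) := lt_of_le_of_ne (hmle _) (Ne.symm hi₁')
  constructor
  · -- all min-source edges have nonnegative pairing
    intro e he hemin
    have h1 := hemin _ he₀
    simp only [hsrc] at h1
    rw [hE] at he
    obtain ⟨i, p, h | h⟩ := he
    · rw [h.2]; rw [h.2] at h1
      simp only [hsrc] at h1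
      rw [hdA]
      have := hmle p; have := hmle i; linarith
    · rw [h.2]; rw [h.2] at h1
      simp only [hsrc] at h1
      rw [hdB]
      have := hmle p; have := hmle i; have := hmle (i+1); linarith
  · -- the witness edge: i = p = i₁, type B
    have hne : i₁ ≠ i₁ + 1 := by
      intro h; rw [← h] at hi₁'; exact hi₁' hi₁
    refine ⟨((Pi.single i₁ (1:ℝ) : Fin n → ℝ) + (2:ℝ) • (Pi.single i₁ (1:ℝ) : Fin n → ℝ),
      (2:ℝ) • (Pi.single i₁ (1:ℝ) : Fin n → ℝ) + Pi.single (i₁+1) (1:ℝ)), ?_, ?_, ?_⟩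
    · rw [hE]; exact ⟨i₁, i₁, Or.inr ⟨hne, rfl⟩⟩
    · intro e' he'
      have := hlb e' he'
      simp only [hsrc, hi₁]; linarith
    · rw [hdB, hi₁]; linarith
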